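/- Let P = (p_1, ..., p_k) and Q = (q_1, ..., q_k) be probability vectors with p_i > 0 for all i and p_1 ≥ p_2 ≥ ... ≥ p_k. If there exists j ≠ 1 with q_j ≥ q_1, then the chi-squared divergence ∑_i (q_i - p_i)^2 / p_i is at least (p_1 - p_2)^2 / ((p_1 + p_2) - (p_1 - p_2)^2). -/

import Mathlib

set_option maxHeartbeats 1000000


/-- Chi-squared divergence lower bound when the argmax of `Q` differs from that of `P`. -/
theorem chi_squared_lower_bound (k : ℕ) (P Q : Fin (k + 2) → ℝ)
    (hPpos : ∀ i, 0 < P i) (hPsum : ∑ i, P i = 1)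
    (hQnn : ∀ i, 0 ≤ Q i) (hQsum : ∑ i, Q i = 1)
    (hPmono : ∀ i j : Fin (k + 2), i ≤ j → P j ≤ P i)
    (hmax : ∃ j : Fin (k + 2), j ≠ 0 ∧ Q 0 ≤ Q j) :
    (P 0 - P 1) ^ 2 / ((P 0 + P 1) - (P 0 - P 1) ^ 2) ≤
      ∑ i, (Q i - P i) ^ 2 / P i := by
  obtain ⟨j, hj0, hQj⟩ := hmax
  have ha : 0 < P 0 := hPpos 0
  have hb : 0 < P j := hPpos j
  have hp1 : 0 < P 1 := hPpos 1
  have h1j : (1 : Fin (k+2)) ≤ j := by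
    rw [Fin.le_def]
    have := Fin.pos_of_ne_zero hj0
    rw [Fin.lt_iff_val_lt_val] at this
    simp only [Fin.val_zero, Fin.val_one] at this ⊢
    omega
  have hbp1 : P j ≤ P 1 := hPmono 1 j h1j
  have hp1a : P 1 ≤ P 0 := hPmono 0 1 (by simp [Fin.le_def])
  have hba : P j ≤ P 0 := hbp1.trans hp1a
  have ha1 : P 0 ≤ 1 := by
    rw [← hPsum]
    exact Finset.single_le_sum (fun i _ => (hPpos i).le) (Finset.mem_univ 0)
  have hj0' : (0 : Fin (k+2)) ≠ j := Ne.symm hj0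
  set t : ℝ := P j - P 0 with ht
  set c : Fin (k+2) → ℝ :=
    fun i => t + (if i = 0 then 1 else 0) - (if i = j then 1 else 0) with hc
  -- the linear functional value
  have hL : ∑ i, c i * (Q i - P i) = (Q 0 - Q j) - (P 0 - P j) := by
    have key : ∀ i ∈ Finset.univ, c i * (Q i - P i) =
        t * Q i - t * P i + ((if i = 0 then Q i - P i else 0)
          - (if i = j then Q i - P i else 0)) := by
      intro i _
      simp only [hc]
      split_ifs <;> ring
    rw [Finset.sum_congr rfl key]
    rw [Finset.sum_add_distrib, Finset.sum_sub_distrib, Finset.sum_sub_distrib,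
      ← Finset.mul_sum, ← Finset.mul_sum, hQsum, hPsum]
    simp [Finset.sum_ite_eq']
    ring
  -- the weighted square sum
  have hS : ∑ i, (c i)^2 * P i = (P 0 + P j) - (P 0 - P j)^2 := by
    have key : ∀ i ∈ Finset.univ, (c i)^2 * P i =
        t^2 * P i + ((if i = 0 then (2*t+1) * P i else 0)
          + (if i = j then (1-2*t) * P i else 0)) := by
      intro i _
      simp only [hc]
      split_ifs with h1 h2
      · exact absurd (h1 ▸ h2) hj0'
      · ring
      · ring
      · ring
    rw [Finset.sum_congr rfl key]
    rw [Finset.sum_add_distrib, Finset.sum_add_distrib, ← Finset.mul_sum, hPsum]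
    simp [Finset.sum_ite_eq']
    ring
  have hSpos : 0 < (P 0 + P j) - (P 0 - P j)^2 := by nlinarith
  -- Cauchy-Schwarz
  have hCS : (∑ i, c i * (Q i - P i))^2 ≤
      (∑ i, (c i)^2 * P i) * ∑ i, (Q i - P i)^2 / P i := by
    apply Finset.sum_sq_le_sum_mul_sum_of_sq_eq_mul
    · intro i _; exact mul_nonneg (sq_nonneg _) (hPpos i).le
    · intro i _; exact div_nonneg (sq_nonneg _) (hPpos i).le
    · intro i _
      have hne : P i ≠ 0 := (hPpos i).ne'
      field_simp
  rw [hL, hS] at hCS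
  have hLsq : (P 0 - P j)^2 ≤ ((Q 0 - Q j) - (P 0 - P j))^2 := by nlinarith
  have hD1 : (P 0 - P j)^2 / ((P 0 + P j) - (P 0 - P j)^2) ≤ ∑ i, (Q i - P i)^2 / P i := by
    rw [div_le_iff₀ hSpos]
    nlinarith [hCS, hLsq]
  refine le_trans ?_ hD1
  have hS1pos : 0 < (P 0 + P 1) - (P 0 - P 1)^2 := by nlinarith
  rw [div_le_div_iff₀ hS1pos hSpos]
  have hfac : 0 ≤ 2 * P 0 * ((P 0 - P j) + (P 0 - P 1)) - (P 0 - P j) * (P 0 - P 1) := by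
    nlinarith [hb, hp1, hba, hp1a]
  have h := mul_nonneg (sub_nonneg.2 hbp1) hfac
  nlinarith [h]
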